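/- If G and H are DAGs on [n] with the same skeleton and the same unshielded colliders, and π is a path in H between i and j containing a collider u → v ← w such that (u,v,w) is not a collider configuration in G, then u and w are adjacent in H; consequently π can be shortened by replacing u → v ← w with the edge between u and w. -/

import Mathlib

/-- A walk in the skeleton of the digraph `E`: consecutive vertices are adjacent. -/
def IsWalk {n : ℕ} (E : Fin n → Fin n → Prop) (p : List (Fin n)) : Prop :=
  p.Chain' fun a b => E a b ∨ E b a

/-- Ancestors of the set `K` (including `K` itself): vertices with a directed path
into `K`. -/
def ancSet {n : ℕ} (E : Fin n → Fin n → Prop) (K : Set (Fin n)) : Set (Fin n) :=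
  {v | ∃ k ∈ K, Relation.ReflTransGen E v k}

/-- A path (as a list of vertices) is d-connecting given `K` if it is a walk in the
skeleton, every collider on it lies in `K ∪ an(K)`, and no non-collider on it lies
in `K`. -/
def DConnecting {n : ℕ} (E : Fin n → Fin n → Prop) (K : Set (Fin n))
    (p : List (Fin n)) : Prop :=
  IsWalk E p ∧
  ∀ a b c : Fin n, [a, b, c] <:+: p →
    ((E a b ∧ E c b) → b ∈ ancSet E K) ∧ (¬(E a b ∧ E c b) → b ∉ K)

open Classical in
/-- The number of colliders on a path. -/
noncomputable def colliderCount {n : ℕ} (E : Fin n → Fin n → Prop) :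
    List (Fin n) → ℕ
  | a :: b :: c :: rest =>
      (if E a b ∧ E c b then 1 else 0) + colliderCount E (b :: c :: rest)
  | _ => 0

/-- A path is *-connecting given `K` if it is d-connecting given `K` and contains at
most one collider. -/
def StarConnecting {n : ℕ} (E : Fin n → Fin n → Prop) (K : Set (Fin n))
    (p : List (Fin n)) : Prop :=
  DConnecting E K p ∧ colliderCount E p ≤ 1

/-- `i` and `j` are d-connected given `K`. -/
def DConn {n : ℕ} (E : Fin n → Fin n → Prop) (K : Set (Fin n)) (i j : Fin n) : Prop :=
  ∃ p : List (Fin n), p.head? = some i ∧ p.getLast? = some j ∧ 2 ≤ p.length ∧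
    DConnecting E K p

/-- `i` and `j` are *-connected given `K`. -/
def StarConn {n : ℕ} (E : Fin n → Fin n → Prop) (K : Set (Fin n)) (i j : Fin n) : Prop :=
  ∃ p : List (Fin n), p.head? = some i ∧ p.getLast? = some j ∧ 2 ≤ p.length ∧
    StarConnecting E K p

/-- `K` d-separates `I` and `J`. -/
def DSep {n : ℕ} (E : Fin n → Fin n → Prop) (I J K : Set (Fin n)) : Prop :=
  ∀ i ∈ I, ∀ j ∈ J, ¬ DConn E K i j

/-- `K` *-separates `I` and `J`. -/
def StarSep {n : ℕ} (E : Fin n → Fin n → Prop) (I J K : Set (Fin n)) : Prop :=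
  ∀ i ∈ I, ∀ j ∈ J, ¬ StarConn E K i j

/-- `E` and `F` have the same skeleton. -/
def SameSkeleton {n : ℕ} (E F : Fin n → Fin n → Prop) : Prop :=
  ∀ i j, (E i j ∨ E j i) ↔ (F i j ∨ F j i)

/-- `(i, k, j)` is an unshielded collider: `i → k ← j` with `i, j` nonadjacent. -/
def UnshieldedCollider {n : ℕ} (E : Fin n → Fin n → Prop) (i k j : Fin n) : Prop :=
  E i k ∧ E j k ∧ i ≠ j ∧ ¬(E i j ∨ E j i)

/-- Let `E` and `F` be DAGs with the same skeleton and same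
unshielded colliders, and let `p = s ++ [u,v,w] ++ t` be a path in `F` between `i` and
`j` on which `v` is a collider (`u → v ← w` in `F`, with `u ≠ w`) such that `(u,v,w)`
is not a collider configuration in `E`. Then `u` and `w` are adjacent in `F`, and `p`
can be shortened: replacing `u → v ← w` by the edge between `u` and `w` yields a walk
in `F` between `i` and `j`. -/
theorem collider_shortcut {n : ℕ} (E F : Fin n → Fin n → Prop)
    (hE : ∀ i, ¬ Relation.TransGen E i i) (hF : ∀ i, ¬ Relation.TransGen F i i)
    (hskel : SameSkeleton E F)
    (huc : ∀ i k j, UnshieldedCollider E i k j ↔ UnshieldedCollider F i k j)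
    (i j u v w : Fin n) (s t : List (Fin n)) (huw : u ≠ w)
    (hwalk : IsWalk F (s ++ u :: v :: w :: t))
    (hhead : (s ++ u :: v :: w :: t).head? = some i)
    (hlast : (s ++ u :: v :: w :: t).getLast? = some j)
    (hcolF : F u v ∧ F w v) (hcolE : ¬(E u v ∧ E w v)) :
    (F u w ∨ F w u) ∧ IsWalk F (s ++ u :: w :: t) ∧
      (s ++ u :: w :: t).head? = some i ∧ (s ++ u :: w :: t).getLast? = some j := by
  have hadj : F u w ∨ F w u := by
    by_contra hna
    have huF : UnshieldedCollider F u v w := ⟨hcolF.1, hcolF.2, huw, hna⟩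
    have huE := (huc u v w).2 huF
    exact hcolE ⟨huE.1, huE.2.1⟩
  refine ⟨hadj, ?_, ?_, ?_⟩
  · unfold IsWalk List.Chain' at hwalk ⊢
    rw [List.isChain_append] at hwalk ⊢
    obtain ⟨h1, h2, h3⟩ := hwalk
    rw [List.isChain_cons_cons, List.isChain_cons_cons] at h2
    refine ⟨h1, List.isChain_cons_cons.2 ⟨hadj, h2.2.2⟩, ?_⟩
    simpa using h3
  · cases s <;> simpa using hhead
  · rw [List.getLast?_append] at hlast ⊢
    cases t <;> simp_all [List.getLast?]
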